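/- (Projected KDE never exceeds the original KDE; deterministic core of the right side of Lemma 3.2.) Let n ≥ 1, d, m ≥ 1, let p₁,…,pₙ ∈ ℝ^d and q₁,…,qₙ ∈ ℝ^m satisfy ‖pᵢ − pⱼ‖ ≤ ‖qᵢ − qⱼ‖ for all i, j ∈ {1,…,n}. Then for every x ∈ ℝ^m there exists y ∈ ℝ^d such that Σ_{i=1}^n exp(−‖x−qᵢ‖²) ≤ Σ_{i=1}^n exp(−‖y−pᵢ‖²). -/

import Mathlib

open scoped BigOperators RealInnerProductSpace
open Filter Topology

lemma var_ineq {E : Type*} [NormedAddCommGroup E] [InnerProductSpace ℝ E] {κ : Type*} [Fintype κ]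
    (w : κ → ℝ) (a : κ → E) (hw1 : ∑ k, w k = 1) (v : E) :
    ∑ k, w k * ‖a k - v‖^2
      = (∑ k, w k * ‖a k - (∑ l, w l • a l)‖^2) + ‖(∑ l, w l • a l) - v‖^2 := by
  set b := ∑ l, w l • a l with hb
  have hzero : ∑ k, w k • (a k - b) = 0 := by
    simp only [smul_sub, Finset.sum_sub_distrib, ← Finset.sum_smul, hw1, one_smul, ← hb, sub_self]
  have hmid : ∑ k, w k * ⟪a k - b, b - v⟫ = 0 := by
    have : ∑ k, w k * ⟪a k - b, b - v⟫ = ⟪∑ k, w k • (a k - b), b - v⟫ := by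
      rw [sum_inner]
      simp [real_inner_smul_left]
    rw [this, hzero, inner_zero_left]
  have expand : ∀ k, ‖a k - v‖^2 = ‖a k - b‖^2 + 2 * ⟪a k - b, b - v⟫ + ‖b - v‖^2 := by
    intro k
    have : a k - v = (a k - b) + (b - v) := by abel
    rw [this, norm_add_sq_real]
  calc ∑ k, w k * ‖a k - v‖^2
      = ∑ k, (w k * ‖a k - b‖^2 + 2 * (w k * ⟪a k - b, b - v⟫) + w k * ‖b - v‖^2) := by
        refine Finset.sum_congr rfl fun k _ => ?_; rw [expand k]; ring
    _ = (∑ k, w k * ‖a k - b‖^2) + 2 * (∑ k, w k * ⟪a k - b, b - v⟫)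
          + (∑ k, w k) * ‖b - v‖^2 := by
        rw [Finset.sum_add_distrib, Finset.sum_add_distrib, ← Finset.mul_sum, ← Finset.sum_mul]
    _ = (∑ k, w k * ‖a k - b‖^2) + ‖b - v‖^2 := by rw [hmid, hw1]; ring

lemma pair_identity {E : Type*} [NormedAddCommGroup E] [InnerProductSpace ℝ E] {κ : Type*}
    [Fintype κ] (w : κ → ℝ) (a : κ → E) (hw1 : ∑ k, w k = 1) :
    ∑ k, ∑ l, w k * w l * ‖a k - a l‖^2
      = 2 * ∑ k, w k * ‖a k - (∑ l, w l • a l)‖^2 := by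
  set b := ∑ l, w l • a l with hb
  calc ∑ k, ∑ l, w k * w l * ‖a k - a l‖^2
      = ∑ k, w k * ∑ l, w l * ‖a l - a k‖^2 := by
        refine Finset.sum_congr rfl fun k _ => ?_
        rw [Finset.mul_sum]
        refine Finset.sum_congr rfl fun l _ => ?_
        rw [norm_sub_rev]; ring
    _ = ∑ k, w k * ((∑ l, w l * ‖a l - b‖^2) + ‖b - a k‖^2) := by
        refine Finset.sum_congr rfl fun k _ => ?_
        rw [var_ineq w a hw1 (a k)]
    _ = (∑ k, w k) * (∑ l, w l * ‖a l - b‖^2) + ∑ k, w k * ‖a k - b‖^2 := by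
        simp only [mul_add, Finset.sum_add_distrib, ← Finset.sum_mul]
        congr 1
        refine Finset.sum_congr rfl fun k _ => ?_
        rw [norm_sub_rev b]
    _ = 2 * ∑ k, w k * ‖a k - b‖^2 := by rw [hw1]; ring

lemma one_point_kirszbraun {E : Type*} [NormedAddCommGroup E] [InnerProductSpace ℝ E]
    [FiniteDimensional ℝ E] {n : ℕ} (hn : 0 < n) (p : Fin n → E) (r : Fin n → ℝ)
    (habs : ∀ (κ : Type) [Fintype κ] (w : κ → ℝ) (j : κ → Fin n), (∀ k, 0 ≤ w k) →
      ∑ k, w k = 1 →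
      ∑ k, ∑ l, w k * w l * ‖p (j k) - p (j l)‖^2 ≤ 2 * ∑ k, w k * r (j k)^2) :
    ∃ y : E, ∀ i, ‖y - p i‖^2 ≤ r i ^2 := by
  have hne : (Finset.univ : Finset (Fin n)).Nonempty := ⟨⟨0, hn⟩, Finset.mem_univ _⟩
  set f : E → ℝ := fun y => Finset.univ.sup' hne (fun i => ‖y - p i‖^2 - r i ^2) with hf
  have hfcont : Continuous f := by
    apply Continuous.finset_sup'_apply hne
    intro i _
    fun_prop
  have hle : ∀ y i, ‖y - p i‖^2 - r i ^2 ≤ f y := fun y i =>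
    Finset.le_sup' (fun i => ‖y - p i‖^2 - r i ^2) (Finset.mem_univ i)
  -- existence of a global minimizer
  obtain ⟨y, hy⟩ : ∃ y : E, ∀ z : E, f y ≤ f z := by
    set i₀ : Fin n := ⟨0, hn⟩
    set c₀ : ℝ := f (p i₀) with hc₀
    have hc₀0 : 0 ≤ c₀ + r i₀ ^2 := by
      have := hle (p i₀) i₀
      simp only [sub_self, norm_zero] at this
      nlinarith [this]
    set R : ℝ := Real.sqrt (c₀ + r i₀ ^2) + 1 with hR
    have hR0 : 0 < R := by positivity
    have hout : ∀ z : E, z ∉ Metric.closedBall (p i₀) R → c₀ < f z := by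
      intro z hz
      rw [Metric.mem_closedBall, not_le, dist_eq_norm] at hz
      have h1 : c₀ + r i₀ ^2 ≤ R^2 := by
        have h2 : Real.sqrt (c₀ + r i₀ ^2) ^ 2 = c₀ + r i₀ ^2 := Real.sq_sqrt hc₀0
        nlinarith [Real.sqrt_nonneg (c₀ + r i₀ ^2)]
      have h3 : ‖z - p i₀‖^2 - r i₀ ^2 ≤ f z := hle z i₀
      nlinarith [hz, hR0]
    obtain ⟨y, hyB, hymin⟩ := (isCompact_closedBall (p i₀) R).exists_isMinOn
      ⟨p i₀, Metric.mem_closedBall_self hR0.le⟩ hfcont.continuousOn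
    refine ⟨y, fun z => ?_⟩
    by_cases hz : z ∈ Metric.closedBall (p i₀) R
    · exact hymin hz
    · have h1 : f y ≤ c₀ := hymin (Metric.mem_closedBall_self hR0.le)
      exact h1.trans (hout z hz).le
  set c : ℝ := f y with hc
  -- it suffices to show c ≤ 0
  rcases le_or_gt c 0 with hc0 | hc0
  · exact ⟨y, fun i => by have := hle y i; linarith⟩
  exfalso
  -- the active set
  set A : Finset (Fin n) := Finset.univ.filter (fun i => c ≤ ‖y - p i‖^2 - r i ^2) with hA
  have hAne : A.Nonempty := by
    obtain ⟨i, _, hi⟩ := Finset.exists_mem_eq_sup' hne (fun i => ‖y - p i‖^2 - r i ^2)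
    exact ⟨i, Finset.mem_filter.2 ⟨Finset.mem_univ _, le_of_eq (show f y = _ from hi)⟩⟩
  have hAeq : ∀ i ∈ A, ‖y - p i‖^2 = c + r i ^2 := by
    intro i hi
    have h1 := (Finset.mem_filter.1 hi).2
    have h2 := hle y i
    linarith
  -- y lies in the convex hull of the active points
  have hyK : y ∈ convexHull ℝ (p '' ↑A) := by
    by_contra hyK
    have hKco : IsCompact (convexHull ℝ (p '' ↑A)) :=
      ((A.finite_toSet.image p)).isCompact_convexHull ℝ
    have hKne : (convexHull ℝ (p '' ↑A)).Nonempty :=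
      Set.Nonempty.mono (subset_convexHull ℝ _) (hAne.to_set.image p)
    obtain ⟨z, hzK, hz⟩ := exists_norm_eq_iInf_of_complete_convex hKne
      (hKco.isClosed.isComplete) (convex_convexHull ℝ _) y
    have hproj : ∀ v ∈ convexHull ℝ (p '' ↑A), ⟪y - z, v - z⟫ ≤ 0 :=
      (norm_eq_iInf_iff_real_inner_le_zero (convex_convexHull ℝ _) hzK).1 hz
    have hyz : y ≠ z := fun h => hyK (h ▸ hzK)
    set δ : ℝ := ‖y - z‖^2 with hδ
    have hδ0 : 0 < δ := by
      rw [hδ]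
      exact pow_pos (norm_pos_iff.2 (sub_ne_zero.2 hyz)) 2
    -- the expansion of the terms along the segment from y to z
    have hexp : ∀ (i : Fin n) (t : ℝ),
        ‖(y + t • (z - y)) - p i‖^2
          = ‖y - p i‖^2 + 2 * t * ⟪y - p i, z - y⟫ + t^2 * δ := by
      intro i t
      have h1 : (y + t • (z - y)) - p i = (y - p i) + t • (z - y) := by abel
      rw [h1, norm_add_sq_real, real_inner_smul_right, norm_smul, mul_pow, Real.norm_eq_abs,
        sq_abs, norm_sub_rev z y]
      ring
    have hactive : ∀ i ∈ A, ⟪y - p i, z - y⟫ ≤ -δ := by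
      intro i hi
      have h1 : ⟪y - z, p i - z⟫ ≤ 0 :=
        hproj (p i) (subset_convexHull ℝ _ (Set.mem_image_of_mem p hi))
      have h2 : y - p i = (y - z) + (z - p i) := by abel
      have h3 : ⟪y - p i, z - y⟫ = -⟪y - z, y - z⟫ + ⟪y - z, p i - z⟫ := by
        rw [h2, inner_add_left]
        have h4 : (z : E) - y = -(y - z) := by abel
        have h5 : (z : E) - p i = -(p i - z) := by abel
        rw [h4, inner_neg_right, h5, inner_neg_left, inner_neg_right, real_inner_comm (p i - z)]
        ring
      rw [h3, real_inner_self_eq_norm_sq]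
      rw [hδ]
      linarith
    -- find a small t contradicting minimality
    have hev : ∀ i : Fin n, ∀ᶠ t in 𝓝[>] (0:ℝ),
        ‖(y + t • (z - y)) - p i‖^2 - r i ^2 < c := by
      intro i
      by_cases hi : i ∈ A
      · filter_upwards [Ioo_mem_nhdsGT (zero_lt_one)] with t ht
        rw [hexp i t]
        have h1 := hactive i hi
        have h2 := hAeq i hi
        have e1 : t * ⟪y - p i, z - y⟫ ≤ t * (-δ) := mul_le_mul_of_nonneg_left h1 ht.1.le
        have e2 : t^2 * δ ≤ t * δ := by
          have h4 : t^2 ≤ t := by nlinarith [ht.1, ht.2]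
          exact mul_le_mul_of_nonneg_right h4 hδ0.le
        have e3 : 0 < t * δ := mul_pos ht.1 hδ0
        linarith
      · have hlt : ‖y - p i‖^2 - r i ^2 < c := by
          have h1 := hle y i
          have h2 : ¬ (c ≤ ‖y - p i‖^2 - r i ^2) := by
            intro h; exact hi (Finset.mem_filter.2 ⟨Finset.mem_univ _, h⟩)
          push_neg at h2
          exact h2
        have hco : Continuous (fun t : ℝ =>
            ‖y - p i‖^2 + 2 * t * ⟪y - p i, z - y⟫ + t^2 * δ - r i ^2) := by fun_prop
        have ht0 : Tendsto (fun t : ℝ =>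
            ‖y - p i‖^2 + 2 * t * ⟪y - p i, z - y⟫ + t^2 * δ - r i ^2) (𝓝[>] 0)
            (𝓝 (‖y - p i‖^2 - r i ^2)) := by
          have h6 := (hco.tendsto 0).mono_left (nhdsWithin_le_nhds (s := Set.Ioi (0:ℝ)))
          simpa using h6
        filter_upwards [ht0.eventually_lt_const hlt] with t ht
        rw [hexp i t]
        linarith
    have hex : ∃ t : ℝ, ∀ i : Fin n, ‖(y + t • (z - y)) - p i‖^2 - r i ^2 < c := by
      have := eventually_all.2 hev
      exact this.exists
    obtain ⟨t, ht⟩ := hex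
    have h1 : f (y + t • (z - y)) < c := by
      rw [hf]
      exact (Finset.sup'_lt_iff hne).2 fun i _ => ht i
    exact absurd (hy (y + t • (z - y))) (not_le.2 h1)
  -- extract convex combination weights
  rw [mem_convexHull_iff_exists_fintype] at hyK
  obtain ⟨κ, _, w, zp, hw0, hw1, hzs, hsum⟩ := hyK
  choose j hjA hjz using fun k => (Set.mem_image _ _ _).1 (hzs k)
  have hb : ∑ k, w k • p (j k) = y := by
    rw [← hsum]
    exact Finset.sum_congr rfl fun k _ => by rw [hjz k]
  have key := habs κ w j hw0 hw1
  have hpair := pair_identity w (fun k => p (j k)) hw1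
  rw [hb] at hpair
  have hsum2 : ∑ k, w k * ‖p (j k) - y‖^2 = c + ∑ k, w k * r (j k)^2 := by
    have : ∀ k, w k * ‖p (j k) - y‖^2 = w k * c + w k * r (j k)^2 := by
      intro k
      have h1 : ‖y - p (j k)‖^2 = c + r (j k)^2 := hAeq (j k) (hjA k)
      rw [norm_sub_rev, h1]; ring
    simp only [this, Finset.sum_add_distrib, ← Finset.mul_sum, ← Finset.sum_mul, hw1]
    ring
  rw [hpair, hsum2] at key
  linarith

theorem stmt_7 (n d m : ℕ) (hn : 1 ≤ n) (hd : 1 ≤ d) (hm : 1 ≤ m)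
    (p : Fin n → EuclideanSpace ℝ (Fin d)) (q : Fin n → EuclideanSpace ℝ (Fin m))
    (hpq : ∀ i j, ‖p i - p j‖ ≤ ‖q i - q j‖) :
    ∀ x : EuclideanSpace ℝ (Fin m), ∃ y : EuclideanSpace ℝ (Fin d),
      ∑ i, Real.exp (-‖x - q i‖ ^ 2) ≤ ∑ i, Real.exp (-‖y - p i‖ ^ 2) := by
  intro x
  have habs : ∀ (κ : Type) [Fintype κ] (w : κ → ℝ) (j : κ → Fin n), (∀ k, 0 ≤ w k) →
      ∑ k, w k = 1 →
      ∑ k, ∑ l, w k * w l * ‖p (j k) - p (j l)‖^2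
        ≤ 2 * ∑ k, w k * (fun i => ‖x - q i‖) (j k) ^2 := by
    intro κ _ w j hw0 hw1
    have step1 : ∑ k, ∑ l, w k * w l * ‖p (j k) - p (j l)‖^2
        ≤ ∑ k, ∑ l, w k * w l * ‖q (j k) - q (j l)‖^2 := by
      refine Finset.sum_le_sum fun k _ => Finset.sum_le_sum fun l _ => ?_
      have h1 : ‖p (j k) - p (j l)‖^2 ≤ ‖q (j k) - q (j l)‖^2 :=
        pow_le_pow_left₀ (norm_nonneg _) (hpq (j k) (j l)) 2
      have h2 : 0 ≤ w k * w l := mul_nonneg (hw0 k) (hw0 l)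
      exact mul_le_mul_of_nonneg_left h1 h2
    have step2 := pair_identity w (fun k => q (j k)) hw1
    have step3 := var_ineq w (fun k => q (j k)) hw1 x
    have step4 : ∑ k, w k * ‖q (j k) - (∑ l, w l • q (j l))‖^2
        ≤ ∑ k, w k * ‖q (j k) - x‖^2 := by
      have h5 : (0:ℝ) ≤ ‖(∑ l, w l • q (j l)) - x‖^2 := sq_nonneg _
      linarith
    have step5 : ∑ k, w k * ‖q (j k) - x‖^2 = ∑ k, w k * ‖x - q (j k)‖^2 := by
      refine Finset.sum_congr rfl fun k _ => ?_
      rw [norm_sub_rev]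
    calc ∑ k, ∑ l, w k * w l * ‖p (j k) - p (j l)‖^2
        ≤ ∑ k, ∑ l, w k * w l * ‖q (j k) - q (j l)‖^2 := step1
      _ = 2 * ∑ k, w k * ‖q (j k) - (∑ l, w l • q (j l))‖^2 := step2
      _ ≤ 2 * ∑ k, w k * ‖x - q (j k)‖^2 := by rw [← step5]; linarith [step4]
  obtain ⟨y, hy⟩ := one_point_kirszbraun (E := EuclideanSpace ℝ (Fin d)) hn p
      (fun i => ‖x - q i‖) habs
  refine ⟨y, Finset.sum_le_sum fun i _ => ?_⟩
  exact Real.exp_le_exp.2 (neg_le_neg (hy i))
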